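/- Corner-flip recursion for flagged row LLT polynomials: let π be an r-partial d-Dyck path, Σ a marking of π, and (i,j) ∈ Σ a marked corner. Let π* be the path obtained from π by flipping the corner (i,j) (replacing the east-north pair of steps bordering the box (i,j) by a north-east pair, so that (i,j) lies below π*), and set Σ* = Σ \ {(i,j)}. Then, as polynomials in x_1,…,x_M (for any number M of variables), (t − 1)·G_r(π, Σ) = G_r(π*, Σ*) − G_r(π, Σ*). -/
import Mathlib


noncomputable section

open MvPolynomial

/- An `r`-partial `d`-Dyck path (a north/east lattice path from `(0, r)` to
`(d, d)` weakly above the diagonal) is encoded via the full path `N^r π` by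
the columns of its north steps: a monotone `γ : Fin d → ℕ` with `γ j ≤ j`
and `γ j = 0` for `j < r`.  In 0-based coordinates, the box `(i, j)` (with
`i < j`) lies in `Area(π)` iff `γ j ≤ i`, and `(i, j)` is a corner of `π`
iff `γ j = i + 1` and `γ (j - 1) ≤ i`. -/

/-- The coefficient ring `ℚ[t]` and polynomial ring in `x_1, …, x_M`. -/
abbrev RM (M : ℕ) : Type := MvPolynomial (Fin M) (Polynomial ℚ)

/-- The parameter `t`. -/
def tq {M : ℕ} : RM M := C Polynomial.X

/-- `Area(π)` as a set of (0-based) pairs. -/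
def area (d : ℕ) (γ : Fin d → ℕ) : Finset (Fin d × Fin d) :=
  Finset.univ.filter fun p => (p.1 : ℕ) < (p.2 : ℕ) ∧ γ p.2 ≤ (p.1 : ℕ)

/-- `T` is a flagged `(π, Σ)`-row semistandard word: `T (j) ≤ T (i)` for
every marked corner `(i,j) ∈ Σ`, and `T i ≤ i` (1-based) for the first `r`
positions. -/
abbrev IsFlaggedWord (M d r : ℕ) (Sg : Finset (Fin d × Fin d))
    (T : Fin d → Fin M) : Prop :=
  (∀ p ∈ Sg, T p.2 ≤ T p.1) ∧ ∀ i : Fin d, (i : ℕ) < r → (T i : ℕ) ≤ (i : ℕ)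

/-- `inv(T) = #{(i,j) ∈ Area(π) : T j ≤ T i}`. -/
def invT {M d : ℕ} (γ : Fin d → ℕ) (T : Fin d → Fin M) : ℕ :=
  ((area d γ).filter fun p => T p.2 ≤ T p.1).card

/-- The flagged row LLT polynomial `G_r(π, Σ)(x_1, …, x_M; t)`. -/
def G (M d r : ℕ) (γ : Fin d → ℕ) (Sg : Finset (Fin d × Fin d)) : RM M :=
  ∑ T ∈ Finset.univ.filter (IsFlaggedWord M d r Sg),
    tq ^ invT γ T * ∏ i, X (T i)

/-- corner-flip recursion for flagged row LLT polynomials.  If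
`(i₀, j₀) ∈ Σ` is a marked corner of `π`, `π*` is obtained by flipping the
corner `(i₀, j₀)` inside out (so `γ* = update γ j₀ i₀`), and
`Σ* = Σ \ {(i₀,j₀)}`, then `(t - 1)·G_r(π, Σ) = G_r(π*, Σ*) - G_r(π, Σ*)`. -/
theorem corner_flip_recursion (M d r : ℕ) (hrd : r ≤ d) (γ : Fin d → ℕ)
    (hmono : Monotone γ) (hdiag : ∀ j : Fin d, γ j ≤ (j : ℕ))
    (hflag : ∀ j : Fin d, (j : ℕ) < r → γ j = 0)
    (Sg : Finset (Fin d × Fin d))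
    (hSg : ∀ p ∈ Sg, (p.1 : ℕ) < (p.2 : ℕ) ∧ γ p.2 = (p.1 : ℕ) + 1 ∧
      ∀ j' : Fin d, (j' : ℕ) + 1 = (p.2 : ℕ) → γ j' ≤ (p.1 : ℕ))
    (i₀ j₀ : Fin d) (hmem : (i₀, j₀) ∈ Sg) :
    (tq - 1) * G M d r γ Sg =
      G M d r (Function.update γ j₀ (i₀ : ℕ)) (Sg.erase (i₀, j₀)) -
        G M d r γ (Sg.erase (i₀, j₀)) := by
  obtain ⟨hij, hγj, hprev⟩ := hSg _ hmem
  set γ' := Function.update γ j₀ (i₀ : ℕ) with hγ'def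
  have hnotin : (i₀, j₀) ∉ area d γ := by
    simp [area, hγj]
  have harea : area d γ' = insert (i₀, j₀) (area d γ) := by
    ext p
    simp only [area, Finset.mem_insert, Finset.mem_filter, Finset.mem_univ, true_and]
    rcases eq_or_ne p.2 j₀ with h2 | h2
    · have : γ' p.2 = (i₀ : ℕ) := by rw [h2, hγ'def, Function.update_self]
      rw [this, h2, hγj]
      constructor
      · rintro ⟨h1, h3⟩
        rcases eq_or_lt_of_le h3 with h4 | h4
        · left
          have hp1 : p.1 = i₀ := Fin.ext h4.symm
          have : p = (p.1, p.2) := rfl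
          rw [this, hp1, h2]
        · right; exact ⟨h1, h4⟩
      · rintro (h | ⟨h1, h3⟩)
        · rw [h]; exact ⟨hij, le_refl _⟩
        · exact ⟨h1, le_of_lt h3⟩
    · have : γ' p.2 = γ p.2 := by rw [hγ'def, Function.update_of_ne h2]
      rw [this]
      have hpne : p ≠ (i₀, j₀) := fun h => h2 (by rw [h])
      simp [hpne]
  have hinv : ∀ T : Fin d → Fin M,
      invT γ' T = invT γ T + (if T j₀ ≤ T i₀ then 1 else 0) := by
    intro T
    unfold invT
    rw [harea, Finset.filter_insert]
    split
    · rw [Finset.card_insert_of_notMem (fun h => hnotin (Finset.mem_of_mem_filter _ h))]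
    · omega
  have hword : ∀ T : Fin d → Fin M, IsFlaggedWord M d r Sg T ↔
      IsFlaggedWord M d r (Sg.erase (i₀, j₀)) T ∧ T j₀ ≤ T i₀ := by
    intro T
    constructor
    · rintro ⟨h1, h2⟩
      exact ⟨⟨fun p hp => h1 p (Finset.mem_of_mem_erase hp), h2⟩, h1 _ hmem⟩
    · rintro ⟨⟨h1, h2⟩, h3⟩
      refine ⟨fun p hp => ?_, h2⟩
      rcases eq_or_ne p (i₀, j₀) with rfl | hne'
      · exact h3
      · exact h1 p (Finset.mem_erase.2 ⟨hne', hp⟩)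
  unfold G
  rw [Finset.mul_sum, ← Finset.sum_sub_distrib]
  classical
  set W' := Finset.univ.filter (IsFlaggedWord M d r (Sg.erase (i₀, j₀))) with hW'
  have hWsplit : Finset.univ.filter (IsFlaggedWord M d r Sg)
      = W'.filter (fun T => T j₀ ≤ T i₀) := by
    ext T
    simp only [hW', Finset.mem_filter, Finset.mem_univ, true_and, hword T, and_assoc]
  rw [hWsplit, ← Finset.sum_filter_add_sum_filter_not W' (fun T => T j₀ ≤ T i₀)
    (fun T => tq ^ invT γ' T * ∏ i, X (T i) - tq ^ invT γ T * ∏ i, X (T i))]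
  have h0 : ∑ T ∈ W'.filter (fun T => ¬ T j₀ ≤ T i₀),
      ((tq ^ invT γ' T * ∏ i, X (T i) : RM M) - tq ^ invT γ T * ∏ i, X (T i)) = 0 := by
    apply Finset.sum_eq_zero
    intro T hT
    have hnle : ¬ T j₀ ≤ T i₀ := (Finset.mem_filter.1 hT).2
    rw [hinv T, if_neg hnle, add_zero, sub_self]
  rw [h0, add_zero]
  apply Finset.sum_congr rfl
  intro T hT
  have hle : T j₀ ≤ T i₀ := (Finset.mem_filter.1 hT).2
  rw [hinv T, if_pos hle, pow_succ]
  ring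


end
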